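/- arXiv:2212.03328 — 2 statements merged into one kernel-verified Lean document; each statement's English description precedes it below -/
import Mathlib

section
/- Let n, m ≥ 2 and let v_1, …, v_m ∈ ℝ^n be unit vectors (‖v_ℓ‖_2 = 1). Let P be the random-bias vector P := (1/(10√(m log n))) ∑_{ℓ=1}^m ∑_{j ∈ J_ℓ} α_{ℓj} 2^j v_ℓ^{(j)}, where v_ℓ = ∑_{j∈J_ℓ} v_ℓ^{(j)} is the binary decomposition of v_ℓ and the α_{ℓj} are independent random variables uniformly distributed on [-1,1]. Then Pr[‖P‖_∞ > 1/2] ≤ 2/n. -/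
open MeasureTheory
open scoped Classical

/-- The dyadic class `K(j)` of the binary decomposition of `v`: the set of coordinates
`k` with `2^{-j-1} < |v k| ≤ 2^{-j}`. -/
noncomputable def binClass {n : ℕ} (v : Fin n → ℝ) (j : ℤ) : Finset (Fin n) :=
  Finset.univ.filter fun k => (2 : ℝ) ^ (-j - 1) < |v k| ∧ |v k| ≤ (2 : ℝ) ^ (-j)

/-- The index set `J` of the binary decomposition of `v`: those `j` with `K(j) ≠ ∅`. -/
def binIdx {n : ℕ} (v : Fin n → ℝ) : Set ℤ := {j | (binClass v j).Nonempty}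

/-- The piece `v^{(j)}` of the binary decomposition of `v`: it agrees with `v` on `K(j)`
and vanishes elsewhere, so that `v = ∑_{j ∈ J} v^{(j)}`. -/
noncomputable def binComp {n : ℕ} (v : Fin n → ℝ) (j : ℤ) : Fin n → ℝ :=
  fun k => if k ∈ binClass v j then v k else 0

/-- The uniform probability measure on the interval `[-1, 1] ⊂ ℝ`. -/
noncomputable def unifInterval : Measure ℝ :=
  (2⁻¹ : ENNReal) • volume.restrict (Set.Icc (-1 : ℝ) 1)

/-- A realization of the family `α = (α_{ℓ j})_{ℓ ∈ [m], j ∈ ℤ}` from a finite array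
`ω ∈ ℝ^{m × n}`: `α_{ℓ j} := ω_{ℓ k(j)}` where `k(j)` is a fixed representative of the
dyadic class `K_ℓ(j)` of `v_ℓ` (and `α_{ℓ j} := 0` for the irrelevant indices
`j ∉ J_ℓ`). Since the classes `K_ℓ(j)`, `j ∈ J_ℓ`, are pairwise disjoint, pushing
forward a product of uniform measures on `[-1,1]` by this map makes the variables
`α_{ℓ j}`, `ℓ ∈ [m]`, `j ∈ J_ℓ`, independent and uniform on `[-1,1]`. -/
noncomputable def alphaOf {n m : ℕ} (v : Fin m → Fin n → ℝ) (ω : Fin m → Fin n → ℝ) :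
    Fin m → ℤ → ℝ :=
  fun ℓ j => if h : (binClass (v ℓ) j).Nonempty then ω ℓ ((binClass (v ℓ) j).min' h) else 0

/-- The joint distribution of the coefficients `α_{ℓ j}` in Definition 2.2: the
`α_{ℓ j}`, `ℓ ∈ [m]`, `j ∈ J_ℓ`, are independent, uniformly distributed on `[-1,1]`. -/
noncomputable def alphaMeasure (n m : ℕ) (v : Fin m → Fin n → ℝ) :
    Measure (Fin m → ℤ → ℝ) :=
  Measure.map (alphaOf v) (Measure.pi fun _ : Fin m => Measure.pi fun _ : Fin n => unifInterval)

/-- The random bias vector of Definition 2.2: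
`P(α) = (1/(10√(m log n))) ∑_{ℓ=1}^m ∑_{j ∈ J_ℓ} α_{ℓ j} 2^j v_ℓ^{(j)}`,
where `v_ℓ = ∑_{j ∈ J_ℓ} v_ℓ^{(j)}` is the binary decomposition of `v_ℓ`.
(The sum over `j` is a `finsum`: all but finitely many terms vanish, since `v_ℓ^{(j)} = 0`
for `j ∉ J_ℓ`.) -/
noncomputable def biasP (n m : ℕ) (v : Fin m → Fin n → ℝ) (a : Fin m → ℤ → ℝ) :
    Fin n → ℝ :=
  fun k => (10 * Real.sqrt (m * Real.log n))⁻¹ *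
    ∑ ℓ, ∑ᶠ j : ℤ, a ℓ j * (2 : ℝ) ^ j * binComp (v ℓ) j k

/-- The biased product measure `μ_p` on `{-1,1}^n ⊂ ℝ^n`: coordinates are independent,
with `Pr[x i = 1] = (1 + p i)/2` and `Pr[x i = -1] = (1 - p i)/2`. -/
noncomputable def cubeMeasure {n : ℕ} (p : Fin n → ℝ) : Measure (Fin n → ℝ) :=
  Measure.pi fun i =>
    ENNReal.ofReal ((1 + p i) / 2) • Measure.dirac (1 : ℝ) +
      ENNReal.ofReal ((1 - p i) / 2) • Measure.dirac (-1 : ℝ)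

/-- The joint distribution of `(P, x)`, where `P` is the random bias vector of
Definition 2.2 (parametrized by `α`), conditioned on `‖P‖_∞ ≤ 1/2`, and, given `P`,
`x ~ μ_P`. -/
noncomputable def biasJoint (n m : ℕ) (v : Fin m → Fin n → ℝ) :
    Measure ((Fin m → ℤ → ℝ) × (Fin n → ℝ)) :=
  (ProbabilityTheory.cond (alphaMeasure n m v) {a | ∀ k, |biasP n m v a k| ≤ 1 / 2}).bind
    fun a => (cubeMeasure (biasP n m v a)).map (Prod.mk a)

instance : IsProbabilityMeasure unifInterval := by
  constructor
  rw [unifInterval]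
  simp [Real.volume_Icc]
  norm_num
  exact ENNReal.inv_mul_cancel (by norm_num) (by norm_num)

theorem pi_prod_integral {ι : Type*} [Fintype ι] {E : Type*} [MeasurableSpace E]
    (μ : Measure E) [SigmaFinite μ] (f : ι → E → ℝ) :
    ∫ x : ι → E, ∏ i, f i (x i) ∂(Measure.pi fun _ : ι => μ) = ∏ i, ∫ x, f i x ∂μ := by
  letI : MeasureSpace E := { volume := μ }
  exact integral_fintype_prod_eq_prod f

theorem pi_prod_integrable {ι : Type*} [Fintype ι] {E : Type*} [MeasurableSpace E]
    (μ : Measure E) [SigmaFinite μ] (f : ι → E → ℝ) (hf : ∀ i, Integrable (f i) μ) :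
    Integrable (fun x : ι → E => ∏ i, f i (x i)) (Measure.pi fun _ : ι => μ) := by
  letI : MeasureSpace E := { volume := μ }
  exact Integrable.fintype_prod hf

lemma integrable_unif {f : ℝ → ℝ} (hf : Continuous f) : Integrable f unifInterval := by
  rw [unifInterval]
  exact ((hf.integrableOn_Icc).smul_measure (by norm_num))

lemma unif_ae_mem : ∀ᵐ u ∂unifInterval, u ∈ Set.Icc (-1 : ℝ) 1 := by
  rw [unifInterval]
  exact Measure.ae_smul_measure (ae_restrict_mem measurableSet_Icc) _

lemma unif_integral_affine (A B : ℝ) : ∫ u, (A + B * u) ∂unifInterval = A := by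
  rw [unifInterval, integral_smul_measure]
  have h1 : ∫ u in Set.Icc (-1:ℝ) 1, (A + B * u) = 2 * A := by
    rw [MeasureTheory.integral_Icc_eq_integral_Ioc,
      ← intervalIntegral.integral_of_le (by norm_num : (-1:ℝ) ≤ 1)]
    rw [intervalIntegral.integral_add (intervalIntegrable_const)
      ((by fun_prop : Continuous fun x : ℝ => B * x).intervalIntegrable _ _)]
    rw [intervalIntegral.integral_const, intervalIntegral.integral_const_mul,
      integral_id]
    norm_num
  rw [h1]
  simp

lemma unif_mgf_le (c : ℝ) : ∫ u, Real.exp (c * u) ∂unifInterval ≤ Real.exp (c ^ 2 / 2) := by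
  have hmono : ∫ u, Real.exp (c * u) ∂unifInterval
      ≤ ∫ u, (Real.cosh c + Real.sinh c * u) ∂unifInterval := by
    refine integral_mono_ae (integrable_unif (Real.continuous_exp.comp
      (continuous_const.mul continuous_id)))
      (integrable_unif (continuous_const.add (continuous_const.mul continuous_id))) ?_
    filter_upwards [unif_ae_mem] with u hu
    obtain ⟨hu1, hu2⟩ := hu
    have hconv := convexOn_exp.2 (Set.mem_univ (-c)) (Set.mem_univ c)
      (by linarith : (0:ℝ) ≤ (1 - u) / 2) (by linarith : (0:ℝ) ≤ (1 + u) / 2) (by ring)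
    simp only [smul_eq_mul] at hconv
    calc Real.exp (c * u) = Real.exp ((1 - u) / 2 * (-c) + (1 + u) / 2 * c) := by ring_nf
      _ ≤ (1 - u) / 2 * Real.exp (-c) + (1 + u) / 2 * Real.exp c := hconv
      _ = Real.cosh c + Real.sinh c * u := by rw [Real.cosh_eq, Real.sinh_eq]; ring
  rw [unif_integral_affine] at hmono
  exact hmono.trans (Real.cosh_le_exp_half_sq c)

lemma prod_ite_eval {n : ℕ} (g : ℝ → ℝ) (r : Fin n) (x : Fin n → ℝ) :
    (∏ i, (if i = r then g (x i) else 1)) = g (x r) := by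
  rw [Finset.prod_ite_eq' Finset.univ r (fun i => g (x i))]
  simp

lemma nu_eval_integrable {n : ℕ} (g : ℝ → ℝ) (hg : Integrable g unifInterval) (r : Fin n) :
    Integrable (fun x : Fin n → ℝ => g (x r))
      (Measure.pi fun _ : Fin n => unifInterval) := by
  have h2 := pi_prod_integrable unifInterval (fun (i : Fin n) (u : ℝ) => if i = r then g u else 1)
    (fun i => by
      by_cases h : i = r
      · subst h; simpa using hg
      · simp only [if_neg h]; exact integrable_const 1)
  have h1 : (fun x : Fin n → ℝ => ∏ i, (fun (i : Fin n) (u : ℝ) => if i = r then g u else 1) i (x i))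
      = fun x => g (x r) := funext fun x => prod_ite_eval g r x
  rw [← h1]
  exact h2

lemma nu_eval_integral {n : ℕ} (g : ℝ → ℝ) (r : Fin n) :
    ∫ x : Fin n → ℝ, g (x r) ∂(Measure.pi fun _ : Fin n => unifInterval)
      = ∫ u, g u ∂unifInterval := by
  calc ∫ x : Fin n → ℝ, g (x r) ∂(Measure.pi fun _ : Fin n => unifInterval)
      = ∫ x : Fin n → ℝ, ∏ i, (if i = r then g (x i) else 1)
          ∂(Measure.pi fun _ : Fin n => unifInterval) := by
        congr 1
        funext x
        exact (prod_ite_eval g r x).symm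
    _ = ∏ i, ∫ u, (if i = r then g u else 1 : ℝ) ∂unifInterval :=
        pi_prod_integral unifInterval (fun (i : Fin n) (u : ℝ) => if i = r then g u else 1)
    _ = ∫ u, g u ∂unifInterval := by
        rw [Finset.prod_eq_single r]
        · simp
        · intro i _ hi
          simp [if_neg hi]
        · simp

lemma chernoff_pi (n m : ℕ) (hm : 0 < m) (w : Fin m → ℝ) (hw : ∀ ℓ, |w ℓ| ≤ 1)
    (r : Fin m → Fin n) (s : ℝ) (hs : 0 ≤ s) :
    (Measure.pi fun _ : Fin m => Measure.pi fun _ : Fin n => unifInterval)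
      {ω | s ≤ ∑ ℓ, w ℓ * ω ℓ (r ℓ)} ≤ ENNReal.ofReal (Real.exp (-(s ^ 2) / (2 * m))) := by
  set ν : Measure (Fin n → ℝ) := Measure.pi fun _ : Fin n => unifInterval with hν
  set μΩ : Measure (Fin m → Fin n → ℝ) := Measure.pi fun _ : Fin m => ν with hμΩ
  set X : (Fin m → Fin n → ℝ) → ℝ := fun ω => ∑ ℓ, w ℓ * ω ℓ (r ℓ) with hX
  set t : ℝ := s / m with ht_def
  have ht : 0 ≤ t := div_nonneg hs (Nat.cast_nonneg m)
  have hmR : (0:ℝ) < m := by exact_mod_cast hm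
  have hXrw : (fun ω : Fin m → Fin n → ℝ => Real.exp (t * X ω))
      = fun ω => ∏ ℓ, Real.exp (t * w ℓ * ω ℓ (r ℓ)) := by
    funext ω
    rw [hX, Finset.mul_sum, Real.exp_sum]
    exact Finset.prod_congr rfl (fun ℓ _ => by rw [mul_assoc])
  have hgcont : ∀ (c : ℝ), Continuous fun u : ℝ => Real.exp (c * u) := fun c =>
    Real.continuous_exp.comp (continuous_const.mul continuous_id)
  have hint : Integrable (fun ω => Real.exp (t * X ω)) μΩ := by
    rw [hXrw]
    exact pi_prod_integrable ν (fun (ℓ : Fin m) (x : Fin n → ℝ) => Real.exp (t * w ℓ * x (r ℓ)))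
      (fun ℓ => nu_eval_integrable _ (integrable_unif (hgcont (t * w ℓ))) (r ℓ))
  have hmgf : ProbabilityTheory.mgf X μΩ t ≤ Real.exp (↑m * t ^ 2 / 2) := by
    have hstep : ProbabilityTheory.mgf X μΩ t
        = ∏ ℓ, ∫ u, Real.exp (t * w ℓ * u) ∂unifInterval := by
      calc ProbabilityTheory.mgf X μΩ t
          = ∫ ω, ∏ ℓ, Real.exp (t * w ℓ * ω ℓ (r ℓ)) ∂μΩ := by
            show (∫ ω, Real.exp (t * X ω) ∂μΩ) = _
            rw [hXrw]
        _ = ∏ ℓ, ∫ x : Fin n → ℝ, Real.exp (t * w ℓ * x (r ℓ)) ∂ν :=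
            pi_prod_integral ν (fun (ℓ : Fin m) (x : Fin n → ℝ) => Real.exp (t * w ℓ * x (r ℓ)))
        _ = ∏ ℓ, ∫ u, Real.exp (t * w ℓ * u) ∂unifInterval :=
            Finset.prod_congr rfl (fun ℓ _ => nu_eval_integral (fun u => Real.exp (t * w ℓ * u)) (r ℓ))
    rw [hstep]
    calc ∏ ℓ, ∫ u, Real.exp (t * w ℓ * u) ∂unifInterval
        ≤ ∏ ℓ : Fin m, Real.exp (t ^ 2 / 2) := by
          refine Finset.prod_le_prod (fun ℓ _ => integral_nonneg fun u => (Real.exp_pos _).le)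
            (fun ℓ _ => ?_)
          refine (unif_mgf_le (t * w ℓ)).trans (Real.exp_le_exp.mpr ?_)
          have h0 : w ℓ ^ 2 ≤ 1 := by nlinarith [hw ℓ, abs_nonneg (w ℓ), sq_abs (w ℓ)]
          have h1 : (t * w ℓ) ^ 2 ≤ t ^ 2 := by nlinarith [sq_nonneg t]
          linarith
      _ = Real.exp (↑m * t ^ 2 / 2) := by
          rw [Finset.prod_const, ← Real.exp_nat_mul]
          norm_num
          ring_nf
  have hch := ProbabilityTheory.measure_ge_le_exp_mul_mgf (μ := μΩ) (X := X) s ht hint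
  have hfin : Real.exp (-t * s) * ProbabilityTheory.mgf X μΩ t
      ≤ Real.exp (-(s ^ 2) / (2 * m)) := by
    calc Real.exp (-t * s) * ProbabilityTheory.mgf X μΩ t
        ≤ Real.exp (-t * s) * Real.exp (↑m * t ^ 2 / 2) :=
          mul_le_mul_of_nonneg_left hmgf (Real.exp_pos _).le
      _ = Real.exp (-t * s + ↑m * t ^ 2 / 2) := (Real.exp_add _ _).symm
      _ = Real.exp (-(s ^ 2) / (2 * m)) := by
          congr 1
          rw [ht_def]
          field_simp
          ring
  rw [show {ω | s ≤ ∑ ℓ, w ℓ * ω ℓ (r ℓ)} = {ω | s ≤ X ω} from rfl]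
  rw [← ENNReal.ofReal_toReal (measure_ne_top μΩ _)]
  exact ENNReal.ofReal_le_ofReal (hch.trans hfin)

noncomputable def jdx (x : ℝ) : ℤ := -Int.clog 2 |x|

lemma jdx_spec {x : ℝ} (hx : x ≠ 0) :
    (2:ℝ) ^ (-(jdx x) - 1) < |x| ∧ |x| ≤ (2:ℝ) ^ (-(jdx x)) := by
  have h0 : (0:ℝ) < |x| := abs_pos.mpr hx
  constructor
  · have h := Int.zpow_pred_clog_lt_self (R := ℝ) (b := 2) one_lt_two h0
    simpa [jdx] using h
  · have h := Int.self_le_zpow_clog (R := ℝ) (b := 2) one_lt_two |x|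
    simpa [jdx] using h

lemma zpow_window_unique {t : ℝ} {j j' : ℤ} (h1 : (2:ℝ) ^ (-j-1) < t) (h2 : t ≤ (2:ℝ) ^ (-j))
    (h1' : (2:ℝ) ^ (-j'-1) < t) (h2' : t ≤ (2:ℝ) ^ (-j')) : j = j' := by
  by_contra hne
  rcases lt_or_gt_of_ne hne with h | h
  · have hle : (2:ℝ) ^ (-j') ≤ (2:ℝ) ^ (-j-1) :=
      zpow_le_zpow_right₀ one_le_two (by omega)
    linarith
  · have hle : (2:ℝ) ^ (-j) ≤ (2:ℝ) ^ (-j'-1) :=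
      zpow_le_zpow_right₀ one_le_two (by omega)
    linarith

lemma mem_binClass_iff {n : ℕ} {v : Fin n → ℝ} {j : ℤ} {k : Fin n} :
    k ∈ binClass v j ↔ v k ≠ 0 ∧ j = jdx (v k) := by
  constructor
  · intro hk
    rw [binClass, Finset.mem_filter] at hk
    obtain ⟨-, h1, h2⟩ := hk
    have hpos : (0:ℝ) < |v k| := lt_trans (by positivity) h1
    have hne : v k ≠ 0 := abs_pos.mp hpos
    obtain ⟨h1', h2'⟩ := jdx_spec hne
    exact ⟨hne, zpow_window_unique h1 h2 h1' h2'⟩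
  · rintro ⟨hne, rfl⟩
    rw [binClass, Finset.mem_filter]
    exact ⟨Finset.mem_univ _, jdx_spec hne⟩

lemma biasP_eq (n m : ℕ) (v : Fin m → Fin n → ℝ) (a : Fin m → ℤ → ℝ) (k : Fin n) :
    biasP n m v a k = (10 * Real.sqrt (m * Real.log n))⁻¹ *
      ∑ ℓ, (if v ℓ k ≠ 0 then a ℓ (jdx (v ℓ k)) * (2:ℝ) ^ (jdx (v ℓ k)) * v ℓ k else 0) := by
  rw [biasP]
  congr 1
  refine Finset.sum_congr rfl (fun ℓ _ => ?_)
  by_cases h : v ℓ k = 0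
  · rw [if_neg (by simpa using h)]
    have hz : ∀ j : ℤ, a ℓ j * (2:ℝ) ^ j * binComp (v ℓ) j k = 0 := by
      intro j
      rw [binComp]
      by_cases hk : k ∈ binClass (v ℓ) j
      · rw [if_pos hk, h, mul_zero]
      · rw [if_neg hk, mul_zero]
    simp only [hz]
    exact finsum_zero
  · rw [if_pos h]
    have hk : k ∈ binClass (v ℓ) (jdx (v ℓ k)) := mem_binClass_iff.mpr ⟨h, rfl⟩
    rw [finsum_eq_single _ (jdx (v ℓ k)) ?_]
    · rw [binComp, if_pos hk]
    · intro j hj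
      rw [binComp, if_neg, mul_zero]
      intro hmem
      exact hj (mem_binClass_iff.mp hmem).2


/-- Lemma 2.3: if `n, m ≥ 2` and `v_1, …, v_m ∈ ℝ^n` are unit vectors,
then the random bias vector `P` of Definition 2.2 satisfies `Pr[‖P‖_∞ > 1/2] ≤ 2/n`. -/
theorem stmt_3 (n m : ℕ) (hn : 2 ≤ n) (hm : 2 ≤ m)
    (v : Fin m → Fin n → ℝ) (hv : ∀ ℓ, ∑ i, v ℓ i ^ 2 = 1) :
    alphaMeasure n m v {a | ∃ k, 1 / 2 < |biasP n m v a k|} ≤ ENNReal.ofReal (2 / n) := by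
  have hn1 : (1:ℝ) < (n:ℝ) := by exact_mod_cast lt_of_lt_of_le one_lt_two hn
  have hlog : 0 < Real.log n := Real.log_pos hn1
  have hm0 : 0 < m := by omega
  have hmR : (0:ℝ) < (m:ℝ) := by exact_mod_cast hm0
  set c : ℝ := 10 * Real.sqrt (↑m * Real.log ↑n) with hc_def
  have hc : 0 < c := by
    have h0 : 0 < Real.sqrt (↑m * Real.log ↑n) := Real.sqrt_pos.mpr (by positivity)
    rw [hc_def]; linarith
  set s : ℝ := c / 2 with hs_def
  have hs : 0 ≤ s := by rw [hs_def]; linarith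
  set w : Fin n → Fin m → ℝ :=
    fun k ℓ => if v ℓ k ≠ 0 then (2:ℝ) ^ (jdx (v ℓ k)) * v ℓ k else 0 with hw_def
  set rr : Fin n → Fin m → Fin n := fun k ℓ =>
    if h : (binClass (v ℓ) (jdx (v ℓ k))).Nonempty
      then (binClass (v ℓ) (jdx (v ℓ k))).min' h else k with hrr_def
  have hwb : ∀ k ℓ, |w k ℓ| ≤ 1 := by
    intro k ℓ
    simp only [hw_def]
    by_cases h : v ℓ k = 0
    · simp [h]
    · rw [if_pos (by simpa using h)]
      have hsp := (jdx_spec h).2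
      have h2p : (0:ℝ) < (2:ℝ) ^ (jdx (v ℓ k)) := by positivity
      rw [abs_mul, abs_of_pos h2p]
      calc (2:ℝ) ^ (jdx (v ℓ k)) * |v ℓ k|
          ≤ (2:ℝ) ^ (jdx (v ℓ k)) * (2:ℝ) ^ (-(jdx (v ℓ k))) :=
            mul_le_mul_of_nonneg_left hsp h2p.le
        _ = 1 := by
            rw [← zpow_add₀ (two_ne_zero : (2:ℝ) ≠ 0)]
            simp
  have key : ∀ (ω : Fin m → Fin n → ℝ) (k : Fin n),
      biasP n m v (alphaOf v ω) k = c⁻¹ * ∑ ℓ, w k ℓ * ω ℓ (rr k ℓ) := by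
    intro ω k
    rw [biasP_eq, ← hc_def]
    congr 1
    refine Finset.sum_congr rfl (fun ℓ _ => ?_)
    by_cases h : v ℓ k = 0
    · rw [if_neg (by simpa using h)]
      simp only [hw_def]
      rw [if_neg (by simpa using h), zero_mul]
    · have hk : k ∈ binClass (v ℓ) (jdx (v ℓ k)) := mem_binClass_iff.mpr ⟨h, rfl⟩
      have hne : (binClass (v ℓ) (jdx (v ℓ k))).Nonempty := ⟨k, hk⟩
      rw [if_pos (by simpa using h)]
      simp only [alphaOf, hw_def, hrr_def]
      rw [dif_pos hne, dif_pos hne, if_pos (by simpa using h)]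
      ring
  have halpha : Measurable (alphaOf v) := by
    refine measurable_pi_lambda _ (fun ℓ => measurable_pi_lambda _ (fun j => ?_))
    by_cases h : (binClass (v ℓ) j).Nonempty
    · simp only [alphaOf, dif_pos h]
      exact (measurable_pi_apply _).comp (measurable_pi_apply ℓ)
    · simp only [alphaOf, dif_neg h]
      exact measurable_const
  have hmb : ∀ k, Measurable fun a : Fin m → ℤ → ℝ => biasP n m v a k := by
    intro k
    have hfe : (fun a : Fin m → ℤ → ℝ => biasP n m v a k)
        = fun a => (10 * Real.sqrt (↑m * Real.log ↑n))⁻¹ *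
          ∑ ℓ, (if v ℓ k ≠ 0 then a ℓ (jdx (v ℓ k)) * (2:ℝ) ^ (jdx (v ℓ k)) * v ℓ k else 0) :=
      funext fun a => biasP_eq n m v a k
    rw [hfe]
    refine Measurable.const_mul ?_ _
    refine Finset.measurable_sum _ (fun ℓ _ => ?_)
    by_cases h : v ℓ k ≠ 0
    · simp only [if_pos h]
      exact (((measurable_pi_apply _).comp (measurable_pi_apply ℓ)).mul_const _).mul_const _
    · simp only [if_neg h]
      exact measurable_const
  have hE : MeasurableSet {a : Fin m → ℤ → ℝ | ∃ k, 1 / 2 < |biasP n m v a k|} := by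
    rw [Set.setOf_exists]
    exact MeasurableSet.iUnion fun k => measurableSet_lt measurable_const (hmb k).abs
  rw [alphaMeasure, Measure.map_apply halpha hE]
  have hsub : alphaOf v ⁻¹' {a | ∃ k, 1 / 2 < |biasP n m v a k|}
      ⊆ ⋃ k : Fin n, ({ω : Fin m → Fin n → ℝ | s ≤ ∑ ℓ, w k ℓ * ω ℓ (rr k ℓ)}
        ∪ {ω : Fin m → Fin n → ℝ | s ≤ ∑ ℓ, (fun ℓ' => -(w k ℓ')) ℓ * ω ℓ (rr k ℓ)}) := by
    intro ω hω
    obtain ⟨k, hk⟩ := hω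
    refine Set.mem_iUnion.mpr ⟨k, ?_⟩
    rw [key ω k] at hk
    have habs : |c⁻¹ * ∑ ℓ, w k ℓ * ω ℓ (rr k ℓ)| = c⁻¹ * |∑ ℓ, w k ℓ * ω ℓ (rr k ℓ)| := by
      rw [abs_mul, abs_of_pos (inv_pos.mpr hc)]
    rw [habs] at hk
    have hS : s ≤ |∑ ℓ, w k ℓ * ω ℓ (rr k ℓ)| := by
      have h2 := mul_lt_mul_of_pos_left hk hc
      rw [← mul_assoc, mul_inv_cancel₀ hc.ne', one_mul] at h2
      rw [hs_def]; linarith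
    rcases le_abs.mp hS with h | h
    · exact Or.inl h
    · refine Or.inr ?_
      show s ≤ ∑ ℓ, (fun ℓ' => -(w k ℓ')) ℓ * ω ℓ (rr k ℓ)
      have hneg : ∑ ℓ, (fun ℓ' => -(w k ℓ')) ℓ * ω ℓ (rr k ℓ)
          = -∑ ℓ, w k ℓ * ω ℓ (rr k ℓ) := by
        rw [← Finset.sum_neg_distrib]
        exact Finset.sum_congr rfl (fun ℓ _ => by ring)
      rw [hneg]
      exact h
  refine le_trans (measure_mono hsub) ?_
  refine le_trans (measure_iUnion_le _) ?_
  rw [tsum_fintype]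
  set β : ENNReal := ENNReal.ofReal (Real.exp (-(s ^ 2) / (2 * ↑m))) with hβ_def
  have hterm : ∀ k : Fin n,
      (Measure.pi fun _ : Fin m => Measure.pi fun _ : Fin n => unifInterval)
        ({ω : Fin m → Fin n → ℝ | s ≤ ∑ ℓ, w k ℓ * ω ℓ (rr k ℓ)}
          ∪ {ω : Fin m → Fin n → ℝ | s ≤ ∑ ℓ, (fun ℓ' => -(w k ℓ')) ℓ * ω ℓ (rr k ℓ)})
        ≤ 2 * β := by
    intro k
    refine le_trans (measure_union_le _ _) ?_
    have h1 := chernoff_pi n m hm0 (w k) (hwb k) (rr k) s hs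
    have h2 := chernoff_pi n m hm0 (fun ℓ => -(w k ℓ))
      (fun ℓ => by rw [abs_neg]; exact hwb k ℓ) (rr k) s hs
    rw [two_mul]
    exact add_le_add h1 h2
  refine le_trans (Finset.sum_le_sum (fun k _ => hterm k)) ?_
  rw [Finset.sum_const, Finset.card_univ, Fintype.card_fin, nsmul_eq_mul]
  have hd : (0:ℝ) ≤ ↑m * Real.log ↑n := by positivity
  have hs2 : s ^ 2 = 25 * (↑m * Real.log ↑n) := by
    rw [hs_def, hc_def, div_pow, mul_pow, Real.sq_sqrt hd]
    ring
  have hexp : -(s ^ 2) / (2 * ↑m) = -(25 / 2 * Real.log ↑n) := by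
    rw [hs2]
    field_simp
  have hxpos : (0:ℝ) < (n:ℝ) := by positivity
  have hrpow : Real.exp (-(25 / 2 * Real.log ↑n)) = (n:ℝ) ^ (-(25/2) : ℝ) := by
    rw [Real.rpow_def_of_pos hxpos]
    congr 1
    ring
  have harith : (n:ℝ) * (2 * Real.exp (-(s ^ 2) / (2 * ↑m))) ≤ 2 / (n:ℝ) := by
    rw [hexp, hrpow]
    have h1 : (n:ℝ) * (2 * (n:ℝ) ^ (-(25/2) : ℝ)) = 2 * (n:ℝ) ^ ((1:ℝ) + -(25/2)) := by
      rw [Real.rpow_add hxpos, Real.rpow_one]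
      ring
    have h2 : ((n:ℝ) ^ ((1:ℝ) + -(25/2)) : ℝ) ≤ (n:ℝ) ^ (-(1:ℝ)) :=
      Real.rpow_le_rpow_of_exponent_le hn1.le (by norm_num)
    have h3 : ((n:ℝ) ^ (-(1:ℝ)) : ℝ) = ((n:ℝ))⁻¹ := Real.rpow_neg_one _
    rw [h1, show (2:ℝ)/(n:ℝ) = 2 * (n:ℝ) ^ (-(1:ℝ)) from by rw [h3]; ring]
    exact mul_le_mul_of_nonneg_left h2 (by norm_num)
  calc (n : ENNReal) * (2 * β)
      = ENNReal.ofReal ((n:ℝ) * (2 * Real.exp (-(s ^ 2) / (2 * ↑m)))) := by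
        rw [hβ_def, ENNReal.ofReal_mul (by positivity : (0:ℝ) ≤ (n:ℝ)),
          ENNReal.ofReal_mul (by norm_num : (0:ℝ) ≤ 2),
          ENNReal.ofReal_natCast, ENNReal.ofReal_ofNat]
    _ ≤ ENNReal.ofReal (2 / ↑n) := ENNReal.ofReal_le_ofReal harith
end

section
/- Let X and Y be independent real random variables, let α' > 0 with |Y| ≤ α' almost surely, and let 0 < α ≤ α'. Then the Lévy concentration function satisfies Q(α, X + Y) ≤ Q(2α', X) · Q(α, Y). -/
open MeasureTheory

/-- The Lévy concentration function of a random variable `X` on `(Ω, μ)` at level `α`: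
`Q(α, X) = sup_t Pr[|X - t| < α]`. -/
noncomputable def levyQ {Ω : Type*} [MeasurableSpace Ω] (μ : Measure Ω) (X : Ω → ℝ)
    (α : ℝ) : ENNReal :=
  ⨆ t : ℝ, μ {ω | |X ω - t| < α}

/-- if `X` and `Y` are independent real random variables, `|Y| ≤ α'` almost
surely, and `0 < α ≤ α'`, then `Q(α, X + Y) ≤ Q(2α', X) · Q(α, Y)`. -/
theorem stmt_9 {Ω : Type*} [MeasurableSpace Ω] (μ : Measure Ω) [IsProbabilityMeasure μ]
    (X Y : Ω → ℝ) (hX : Measurable X) (hY : Measurable Y)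
    (hindep : ProbabilityTheory.IndepFun X Y μ)
    (α' : ℝ) (hα' : 0 < α') (hYbound : ∀ᵐ ω ∂μ, |Y ω| ≤ α')
    (α : ℝ) (hα : 0 < α) (hαα' : α ≤ α') :
    levyQ μ (fun ω => X ω + Y ω) α ≤ levyQ μ X (2 * α') * levyQ μ Y α := by
  have hmap : μ.map (fun ω => (X ω, Y ω)) = (μ.map X).prod (μ.map Y) :=
    (ProbabilityTheory.indepFun_iff_map_prod_eq_prod_map_map hX.aemeasurable
      hY.aemeasurable).mp hindep
  set μX := μ.map X with hμX
  set μY := μ.map Y with hμY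
  have hYb : ∀ᵐ y ∂μY, |y| ≤ α' := by
    rw [hμY, ae_map_iff hY.aemeasurable
      (measurableSet_le (measurable_abs) measurable_const)]
    exact hYbound
  have hYnull : μY {y : ℝ | ¬ |y| ≤ α'} = 0 := ae_iff.mp hYb
  rw [levyQ]
  apply iSup_le
  intro t
  have hs : MeasurableSet {p : ℝ × ℝ | |p.1 + p.2 - t| < α} := by
    apply measurableSet_lt _ measurable_const
    exact ((measurable_fst.add measurable_snd).sub measurable_const).abs
  have heq : μ {ω | |X ω + Y ω - t| < α}
      = (μX.prod μY) {p : ℝ × ℝ | |p.1 + p.2 - t| < α} := by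
    rw [← hmap, Measure.map_apply (hX.prodMk hY) hs]
    rfl
  rw [heq, Measure.prod_apply hs]
  have hbound : ∀ x : ℝ, μY (Prod.mk x ⁻¹' {p : ℝ × ℝ | |p.1 + p.2 - t| < α})
      ≤ Set.indicator {x : ℝ | |x - t| < 2 * α'} (fun _ => levyQ μ Y α) x := by
    intro x
    by_cases hx : |x - t| < 2 * α'
    · have h1 : (Prod.mk x ⁻¹' {p : ℝ × ℝ | |p.1 + p.2 - t| < α})
          = {y : ℝ | |y - (t - x)| < α} := by
        ext y; simp only [Set.mem_preimage, Set.mem_setOf_eq]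
        rw [show x + y - t = y - (t - x) by ring]
      calc μY (Prod.mk x ⁻¹' {p : ℝ × ℝ | |p.1 + p.2 - t| < α})
          = μ {ω | |Y ω - (t - x)| < α} := by
            rw [h1, hμY, Measure.map_apply hY
              (measurableSet_lt (by exact ((measurable_id.sub measurable_const).abs)) measurable_const : MeasurableSet {y : ℝ | |y - (t - x)| < α})]
            rfl
        _ ≤ levyQ μ Y α := le_iSup (fun s => μ {ω | |Y ω - s| < α}) (t - x)
        _ = Set.indicator {x : ℝ | |x - t| < 2 * α'} (fun _ => levyQ μ Y α) x :=
            (Set.indicator_of_mem (show x ∈ {x : ℝ | |x - t| < 2 * α'} from hx) (fun _ => levyQ μ Y α)).symm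
    · have hsub : (Prod.mk x ⁻¹' {p : ℝ × ℝ | |p.1 + p.2 - t| < α})
          ⊆ {y : ℝ | ¬ |y| ≤ α'} := by
        intro y hy
        simp only [Set.mem_preimage, Set.mem_setOf_eq] at hy ⊢
        intro hyb
        apply hx
        calc |x - t| = |(x + y - t) - y| := by ring_nf
          _ ≤ |x + y - t| + |y| := abs_sub _ _
          _ < α + α' := add_lt_add_of_lt_of_le hy hyb
          _ ≤ 2 * α' := by linarith
      calc μY _ ≤ μY {y : ℝ | ¬ |y| ≤ α'} := measure_mono hsub
        _ = 0 := hYnull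
        _ ≤ _ := zero_le
  calc ∫⁻ x, μY (Prod.mk x ⁻¹' {p : ℝ × ℝ | |p.1 + p.2 - t| < α}) ∂μX
      ≤ ∫⁻ x, Set.indicator {x : ℝ | |x - t| < 2 * α'} (fun _ => levyQ μ Y α) x ∂μX :=
        lintegral_mono hbound
    _ = levyQ μ Y α * μX {x : ℝ | |x - t| < 2 * α'} := by
        rw [lintegral_indicator
          (measurableSet_lt (by exact ((measurable_id.sub measurable_const).abs)) measurable_const : MeasurableSet {x : ℝ | |x - t| < 2 * α'})]
        simp [mul_comm]
    _ ≤ levyQ μ Y α * levyQ μ X (2 * α') := by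
        apply mul_le_mul_right
        have : μX {x : ℝ | |x - t| < 2 * α'} = μ {ω | |X ω - t| < 2 * α'} := by
          rw [hμX, Measure.map_apply hX
            (measurableSet_lt (by exact ((measurable_id.sub measurable_const).abs)) measurable_const : MeasurableSet {x : ℝ | |x - t| < 2 * α'})]
          rfl
        rw [this]
        exact le_iSup (fun s => μ {ω | |X ω - s| < 2 * α'}) t
    _ = levyQ μ X (2 * α') * levyQ μ Y α := mul_comm _ _
end
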